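/- Let γ>1 and let U=(u,0,p,ρ) with ρ>0, p>0, u>c where c=√(γp/ρ), and let σ satisfy λ₁(U) < σ < 0 where λ₁(U) = −c/√(u²−c²). Set A := DH(U) − σ·DW(U). Then det( A·r̃₄(U), A·r₃(U), A·r₂(U), A·r̃₁(U) ) > 0, where r̃_j(U) = (−λ_j(U), 1, ρ·λ_j(U)·u, ρ·λ_j(U)·u/c²) for j=1,4 (with λ₄(U) = c/√(u²−c²)), r₂(U)=(u,0,0,0), and r₃(U)=(0,0,0,ρ). -/

import Mathlib

noncomputable section

/-- The flux map `W` of the 2-D steady full Euler system,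
with state `U = (u, v, p, ρ)`. -/
def Wf (γ : ℝ) (U : Fin 4 → ℝ) : Fin 4 → ℝ :=
  ![U 3 * U 0,
    U 3 * U 0 ^ 2 + U 2,
    U 3 * U 0 * U 1,
    U 3 * U 0 * (γ * U 2 / ((γ - 1) * U 3) + (U 0 ^ 2 + U 1 ^ 2) / 2)]

/-- The flux map `H` of the 2-D steady full Euler system. -/
def Hf (γ : ℝ) (U : Fin 4 → ℝ) : Fin 4 → ℝ :=
  ![U 3 * U 1,
    U 3 * U 0 * U 1,
    U 3 * U 1 ^ 2 + U 2,
    U 3 * U 1 * (γ * U 2 / ((γ - 1) * U 3) + (U 0 ^ 2 + U 1 ^ 2) / 2)]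

/-- Jacobian matrix of `W` with respect to `(u, v, p, ρ)`. -/
def DW (γ : ℝ) (U : Fin 4 → ℝ) : Matrix (Fin 4) (Fin 4) ℝ :=
  Matrix.of fun i j => fderiv ℝ (fun V => Wf γ V i) U (Pi.single j 1)

/-- Jacobian matrix of `H` with respect to `(u, v, p, ρ)`. -/
def DH (γ : ℝ) (U : Fin 4 → ℝ) : Matrix (Fin 4) (Fin 4) ℝ :=
  Matrix.of fun i j => fderiv ℝ (fun V => Hf γ V i) U (Pi.single j 1)

/-- The 4×4 matrix whose columns are the listed vectors. -/
def colMat (a b c d : Fin 4 → ℝ) : Matrix (Fin 4) (Fin 4) ℝ :=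
  Matrix.of fun i j => ![a, b, c, d] j i

open ContinuousLinearMap

section derivs

abbrev Pj (j : Fin 4) : (Fin 4 → ℝ) →L[ℝ] ℝ := ContinuousLinearMap.proj j

variable (γ : ℝ) (x : Fin 4 → ℝ)

lemma comp0 : (fun V : Fin 4 → ℝ => Wf γ V 0) = fun V => V 3 * V 0 := rfl

lemma comp1 : (fun V : Fin 4 → ℝ => Wf γ V 1) = fun V => V 3 * (V 0 * V 0) + V 2 := by
  funext V; show V 3 * V 0 ^ 2 + V 2 = _; ring

lemma comp2 : (fun V : Fin 4 → ℝ => Wf γ V 2) = fun V => V 3 * V 0 * V 1 := rfl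

lemma comp3 : (fun V : Fin 4 → ℝ => Wf γ V 3) =
    fun V => V 3 * V 0 * (γ * V 2 * ((γ - 1) * V 3)⁻¹ + (V 0 * V 0 + V 1 * V 1) * (2:ℝ)⁻¹) := by
  funext V
  show V 3 * V 0 * (γ * V 2 / ((γ - 1) * V 3) + (V 0 ^ 2 + V 1 ^ 2) / 2) = _
  ring

lemma hcomp0 : (fun V : Fin 4 → ℝ => Hf γ V 0) = fun V => V 3 * V 1 := rfl

lemma hcomp1 : (fun V : Fin 4 → ℝ => Hf γ V 1) = fun V => V 3 * V 0 * V 1 := rfl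

lemma hcomp2 : (fun V : Fin 4 → ℝ => Hf γ V 2) = fun V => V 3 * (V 1 * V 1) + V 2 := by
  funext V; show V 3 * V 1 ^ 2 + V 2 = _; ring

lemma hcomp3 : (fun V : Fin 4 → ℝ => Hf γ V 3) =
    fun V => V 3 * V 1 * (γ * V 2 * ((γ - 1) * V 3)⁻¹ + (V 0 * V 0 + V 1 * V 1) * (2:ℝ)⁻¹) := by
  funext V
  show V 3 * V 1 * (γ * V 2 / ((γ - 1) * V 3) + (V 0 ^ 2 + V 1 ^ 2) / 2) = _
  ring

lemma hd30 : HasFDerivAt (fun V : Fin 4 → ℝ => V 3 * V 0)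
    (x 3 • Pj 0 + x 0 • Pj 3) x :=
  (hasFDerivAt_apply 3 x).mul (hasFDerivAt_apply 0 x)

lemma hd31 : HasFDerivAt (fun V : Fin 4 → ℝ => V 3 * V 1)
    (x 3 • Pj 1 + x 1 • Pj 3) x :=
  (hasFDerivAt_apply 3 x).mul (hasFDerivAt_apply 1 x)

lemma hdW1 : HasFDerivAt (fun V : Fin 4 → ℝ => V 3 * (V 0 * V 0) + V 2)
    ((x 3 • (x 0 • Pj 0 + x 0 • Pj 0) + (x 0 * x 0) • Pj 3) + Pj 2) x :=
  ((hasFDerivAt_apply 3 x).mul ((hasFDerivAt_apply 0 x).mul (hasFDerivAt_apply 0 x))).add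
    (hasFDerivAt_apply 2 x)

lemma hdH2 : HasFDerivAt (fun V : Fin 4 → ℝ => V 3 * (V 1 * V 1) + V 2)
    ((x 3 • (x 1 • Pj 1 + x 1 • Pj 1) + (x 1 * x 1) • Pj 3) + Pj 2) x :=
  ((hasFDerivAt_apply 3 x).mul ((hasFDerivAt_apply 1 x).mul (hasFDerivAt_apply 1 x))).add
    (hasFDerivAt_apply 2 x)

lemma hdW2 : HasFDerivAt (fun V : Fin 4 → ℝ => V 3 * V 0 * V 1)
    ((x 3 * x 0) • Pj 1 + x 1 • (x 3 • Pj 0 + x 0 • Pj 3)) x :=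
  ((hasFDerivAt_apply 3 x).mul (hasFDerivAt_apply 0 x)).mul (hasFDerivAt_apply 1 x)

lemma hdE (hx : (γ - 1) * x 3 ≠ 0) :
    HasFDerivAt (fun V : Fin 4 → ℝ =>
        γ * V 2 * ((γ - 1) * V 3)⁻¹ + (V 0 * V 0 + V 1 * V 1) * (2:ℝ)⁻¹)
      (((γ * x 2) • ((-(((γ - 1) * x 3) ^ 2)⁻¹) • ((γ - 1) • Pj 3)) +
          (((γ - 1) * x 3)⁻¹) • ((γ : ℝ) • Pj 2)) +
        ((2:ℝ)⁻¹ • ((x 0 • Pj 0 + x 0 • Pj 0) + (x 1 • Pj 1 + x 1 • Pj 1)))) x :=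
  (((hasFDerivAt_apply 2 x).const_mul γ).mul
      ((hasDerivAt_inv hx).comp_hasFDerivAt x ((hasFDerivAt_apply 3 x).const_mul (γ - 1)))).add
    ((((hasFDerivAt_apply 0 x).mul (hasFDerivAt_apply 0 x)).add
        ((hasFDerivAt_apply 1 x).mul (hasFDerivAt_apply 1 x))).mul_const (2:ℝ)⁻¹)

lemma hdW3 (hx : (γ - 1) * x 3 ≠ 0) :
    HasFDerivAt (fun V : Fin 4 → ℝ =>
        V 3 * V 0 * (γ * V 2 * ((γ - 1) * V 3)⁻¹ + (V 0 * V 0 + V 1 * V 1) * (2:ℝ)⁻¹))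
      ((x 3 * x 0) • (((γ * x 2) • ((-(((γ - 1) * x 3) ^ 2)⁻¹) • ((γ - 1) • Pj 3)) +
            (((γ - 1) * x 3)⁻¹) • ((γ : ℝ) • Pj 2)) +
          ((2:ℝ)⁻¹ • ((x 0 • Pj 0 + x 0 • Pj 0) + (x 1 • Pj 1 + x 1 • Pj 1)))) +
        (γ * x 2 * ((γ - 1) * x 3)⁻¹ + (x 0 * x 0 + x 1 * x 1) * (2:ℝ)⁻¹) •
          (x 3 • Pj 0 + x 0 • Pj 3)) x :=
  (hd30 x).mul (hdE γ x hx)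

lemma hdH3 (hx : (γ - 1) * x 3 ≠ 0) :
    HasFDerivAt (fun V : Fin 4 → ℝ =>
        V 3 * V 1 * (γ * V 2 * ((γ - 1) * V 3)⁻¹ + (V 0 * V 0 + V 1 * V 1) * (2:ℝ)⁻¹))
      ((x 3 * x 1) • (((γ * x 2) • ((-(((γ - 1) * x 3) ^ 2)⁻¹) • ((γ - 1) • Pj 3)) +
            (((γ - 1) * x 3)⁻¹) • ((γ : ℝ) • Pj 2)) +
          ((2:ℝ)⁻¹ • ((x 0 • Pj 0 + x 0 • Pj 0) + (x 1 • Pj 1 + x 1 • Pj 1)))) +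
        (γ * x 2 * ((γ - 1) * x 3)⁻¹ + (x 0 * x 0 + x 1 * x 1) * (2:ℝ)⁻¹) •
          (x 3 • Pj 1 + x 1 • Pj 3)) x :=
  (hd31 x).mul (hdE γ x hx)

end derivs

section entries

variable {γ u p ρ : ℝ}

lemma hxne (hγ : γ - 1 ≠ 0) (hρ : ρ ≠ 0) (u p : ℝ) :
    (γ - 1) * (![u, 0, p, ρ] : Fin 4 → ℝ) 3 ≠ 0 := by
  simpa using mul_ne_zero hγ hρ

lemma W00 (hγ : γ - 1 ≠ 0) (hρ : ρ ≠ 0) :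
    DW γ ![u, 0, p, ρ] 0 0 = ρ := by
  simp only [DW, Matrix.of_apply, comp0, (hd30 (x := ![u, 0, p, ρ])).fderiv]
  simp [Pi.single_apply]
  all_goals try field_simp
  all_goals try ring

lemma W01 (hγ : γ - 1 ≠ 0) (hρ : ρ ≠ 0) :
    DW γ ![u, 0, p, ρ] 0 1 = 0 := by
  simp only [DW, Matrix.of_apply, comp0, (hd30 (x := ![u, 0, p, ρ])).fderiv]
  simp [Pi.single_apply]
  all_goals try field_simp
  all_goals try ring

lemma W02 (hγ : γ - 1 ≠ 0) (hρ : ρ ≠ 0) :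
    DW γ ![u, 0, p, ρ] 0 2 = 0 := by
  simp only [DW, Matrix.of_apply, comp0, (hd30 (x := ![u, 0, p, ρ])).fderiv]
  simp [Pi.single_apply]
  all_goals try field_simp
  all_goals try ring

lemma W03 (hγ : γ - 1 ≠ 0) (hρ : ρ ≠ 0) :
    DW γ ![u, 0, p, ρ] 0 3 = u := by
  simp only [DW, Matrix.of_apply, comp0, (hd30 (x := ![u, 0, p, ρ])).fderiv]
  simp [Pi.single_apply]
  all_goals try field_simp
  all_goals try ring

lemma W10 (hγ : γ - 1 ≠ 0) (hρ : ρ ≠ 0) :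
    DW γ ![u, 0, p, ρ] 1 0 = 2 * ρ * u := by
  simp only [DW, Matrix.of_apply, comp1, (hdW1 (x := ![u, 0, p, ρ])).fderiv]
  simp [Pi.single_apply]
  all_goals try field_simp
  all_goals try ring

lemma W11 (hγ : γ - 1 ≠ 0) (hρ : ρ ≠ 0) :
    DW γ ![u, 0, p, ρ] 1 1 = 0 := by
  simp only [DW, Matrix.of_apply, comp1, (hdW1 (x := ![u, 0, p, ρ])).fderiv]
  simp [Pi.single_apply]
  all_goals try field_simp
  all_goals try ring

lemma W12 (hγ : γ - 1 ≠ 0) (hρ : ρ ≠ 0) :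
    DW γ ![u, 0, p, ρ] 1 2 = 1 := by
  simp only [DW, Matrix.of_apply, comp1, (hdW1 (x := ![u, 0, p, ρ])).fderiv]
  simp [Pi.single_apply]
  all_goals try field_simp
  all_goals try ring

lemma W13 (hγ : γ - 1 ≠ 0) (hρ : ρ ≠ 0) :
    DW γ ![u, 0, p, ρ] 1 3 = u ^ 2 := by
  simp only [DW, Matrix.of_apply, comp1, (hdW1 (x := ![u, 0, p, ρ])).fderiv]
  simp [Pi.single_apply]
  all_goals try field_simp
  all_goals try ring

lemma W20 (hγ : γ - 1 ≠ 0) (hρ : ρ ≠ 0) :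
    DW γ ![u, 0, p, ρ] 2 0 = 0 := by
  simp only [DW, Matrix.of_apply, comp2, (hdW2 (x := ![u, 0, p, ρ])).fderiv]
  simp [Pi.single_apply]
  all_goals try field_simp
  all_goals try ring

lemma W21 (hγ : γ - 1 ≠ 0) (hρ : ρ ≠ 0) :
    DW γ ![u, 0, p, ρ] 2 1 = ρ * u := by
  simp only [DW, Matrix.of_apply, comp2, (hdW2 (x := ![u, 0, p, ρ])).fderiv]
  simp [Pi.single_apply]
  all_goals try field_simp
  all_goals try ring

lemma W22 (hγ : γ - 1 ≠ 0) (hρ : ρ ≠ 0) :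
    DW γ ![u, 0, p, ρ] 2 2 = 0 := by
  simp only [DW, Matrix.of_apply, comp2, (hdW2 (x := ![u, 0, p, ρ])).fderiv]
  simp [Pi.single_apply]
  all_goals try field_simp
  all_goals try ring

lemma W23 (hγ : γ - 1 ≠ 0) (hρ : ρ ≠ 0) :
    DW γ ![u, 0, p, ρ] 2 3 = 0 := by
  simp only [DW, Matrix.of_apply, comp2, (hdW2 (x := ![u, 0, p, ρ])).fderiv]
  simp [Pi.single_apply]
  all_goals try field_simp
  all_goals try ring

lemma W30 (hγ : γ - 1 ≠ 0) (hρ : ρ ≠ 0) :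
    DW γ ![u, 0, p, ρ] 3 0 = ρ * (γ * p / ((γ - 1) * ρ)) + (3 / 2) * ρ * u ^ 2 := by
  simp only [DW, Matrix.of_apply, comp3, (hdW3 γ (x := ![u, 0, p, ρ]) (hxne hγ hρ u p)).fderiv]
  simp [Pi.single_apply]
  all_goals try field_simp
  all_goals try ring

lemma W31 (hγ : γ - 1 ≠ 0) (hρ : ρ ≠ 0) :
    DW γ ![u, 0, p, ρ] 3 1 = 0 := by
  simp only [DW, Matrix.of_apply, comp3, (hdW3 γ (x := ![u, 0, p, ρ]) (hxne hγ hρ u p)).fderiv]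
  simp [Pi.single_apply]
  all_goals try field_simp
  all_goals try ring

lemma W32 (hγ : γ - 1 ≠ 0) (hρ : ρ ≠ 0) :
    DW γ ![u, 0, p, ρ] 3 2 = γ * u / (γ - 1) := by
  simp only [DW, Matrix.of_apply, comp3, (hdW3 γ (x := ![u, 0, p, ρ]) (hxne hγ hρ u p)).fderiv]
  simp [Pi.single_apply]
  all_goals try field_simp
  all_goals try ring

lemma W33 (hγ : γ - 1 ≠ 0) (hρ : ρ ≠ 0) :
    DW γ ![u, 0, p, ρ] 3 3 = u ^ 3 / 2 := by
  simp only [DW, Matrix.of_apply, comp3, (hdW3 γ (x := ![u, 0, p, ρ]) (hxne hγ hρ u p)).fderiv]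
  simp [Pi.single_apply]
  all_goals try field_simp
  all_goals try ring

lemma H00 (hγ : γ - 1 ≠ 0) (hρ : ρ ≠ 0) :
    DH γ ![u, 0, p, ρ] 0 0 = 0 := by
  simp only [DH, Matrix.of_apply, hcomp0, (hd31 (x := ![u, 0, p, ρ])).fderiv]
  simp [Pi.single_apply]
  all_goals try field_simp
  all_goals try ring

lemma H01 (hγ : γ - 1 ≠ 0) (hρ : ρ ≠ 0) :
    DH γ ![u, 0, p, ρ] 0 1 = ρ := by
  simp only [DH, Matrix.of_apply, hcomp0, (hd31 (x := ![u, 0, p, ρ])).fderiv]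
  simp [Pi.single_apply]
  all_goals try field_simp
  all_goals try ring

lemma H02 (hγ : γ - 1 ≠ 0) (hρ : ρ ≠ 0) :
    DH γ ![u, 0, p, ρ] 0 2 = 0 := by
  simp only [DH, Matrix.of_apply, hcomp0, (hd31 (x := ![u, 0, p, ρ])).fderiv]
  simp [Pi.single_apply]
  all_goals try field_simp
  all_goals try ring

lemma H03 (hγ : γ - 1 ≠ 0) (hρ : ρ ≠ 0) :
    DH γ ![u, 0, p, ρ] 0 3 = 0 := by
  simp only [DH, Matrix.of_apply, hcomp0, (hd31 (x := ![u, 0, p, ρ])).fderiv]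
  simp [Pi.single_apply]
  all_goals try field_simp
  all_goals try ring

lemma H10 (hγ : γ - 1 ≠ 0) (hρ : ρ ≠ 0) :
    DH γ ![u, 0, p, ρ] 1 0 = 0 := by
  simp only [DH, Matrix.of_apply, hcomp1, (hdW2 (x := ![u, 0, p, ρ])).fderiv]
  simp [Pi.single_apply]
  all_goals try field_simp
  all_goals try ring

lemma H11 (hγ : γ - 1 ≠ 0) (hρ : ρ ≠ 0) :
    DH γ ![u, 0, p, ρ] 1 1 = ρ * u := by
  simp only [DH, Matrix.of_apply, hcomp1, (hdW2 (x := ![u, 0, p, ρ])).fderiv]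
  simp [Pi.single_apply]
  all_goals try field_simp
  all_goals try ring

lemma H12 (hγ : γ - 1 ≠ 0) (hρ : ρ ≠ 0) :
    DH γ ![u, 0, p, ρ] 1 2 = 0 := by
  simp only [DH, Matrix.of_apply, hcomp1, (hdW2 (x := ![u, 0, p, ρ])).fderiv]
  simp [Pi.single_apply]
  all_goals try field_simp
  all_goals try ring

lemma H13 (hγ : γ - 1 ≠ 0) (hρ : ρ ≠ 0) :
    DH γ ![u, 0, p, ρ] 1 3 = 0 := by
  simp only [DH, Matrix.of_apply, hcomp1, (hdW2 (x := ![u, 0, p, ρ])).fderiv]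
  simp [Pi.single_apply]
  all_goals try field_simp
  all_goals try ring

lemma H20 (hγ : γ - 1 ≠ 0) (hρ : ρ ≠ 0) :
    DH γ ![u, 0, p, ρ] 2 0 = 0 := by
  simp only [DH, Matrix.of_apply, hcomp2, (hdH2 (x := ![u, 0, p, ρ])).fderiv]
  simp [Pi.single_apply]
  all_goals try field_simp
  all_goals try ring

lemma H21 (hγ : γ - 1 ≠ 0) (hρ : ρ ≠ 0) :
    DH γ ![u, 0, p, ρ] 2 1 = 0 := by
  simp only [DH, Matrix.of_apply, hcomp2, (hdH2 (x := ![u, 0, p, ρ])).fderiv]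
  simp [Pi.single_apply]
  all_goals try field_simp
  all_goals try ring

lemma H22 (hγ : γ - 1 ≠ 0) (hρ : ρ ≠ 0) :
    DH γ ![u, 0, p, ρ] 2 2 = 1 := by
  simp only [DH, Matrix.of_apply, hcomp2, (hdH2 (x := ![u, 0, p, ρ])).fderiv]
  simp [Pi.single_apply]
  all_goals try field_simp
  all_goals try ring

lemma H23 (hγ : γ - 1 ≠ 0) (hρ : ρ ≠ 0) :
    DH γ ![u, 0, p, ρ] 2 3 = 0 := by
  simp only [DH, Matrix.of_apply, hcomp2, (hdH2 (x := ![u, 0, p, ρ])).fderiv]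
  simp [Pi.single_apply]
  all_goals try field_simp
  all_goals try ring

lemma H30 (hγ : γ - 1 ≠ 0) (hρ : ρ ≠ 0) :
    DH γ ![u, 0, p, ρ] 3 0 = 0 := by
  simp only [DH, Matrix.of_apply, hcomp3, (hdH3 γ (x := ![u, 0, p, ρ]) (hxne hγ hρ u p)).fderiv]
  simp [Pi.single_apply]
  all_goals try field_simp
  all_goals try ring

lemma H31 (hγ : γ - 1 ≠ 0) (hρ : ρ ≠ 0) :
    DH γ ![u, 0, p, ρ] 3 1 = ρ * (γ * p / ((γ - 1) * ρ) + u ^ 2 / 2) := by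
  simp only [DH, Matrix.of_apply, hcomp3, (hdH3 γ (x := ![u, 0, p, ρ]) (hxne hγ hρ u p)).fderiv]
  simp [Pi.single_apply]
  all_goals try field_simp
  all_goals try ring

lemma H32 (hγ : γ - 1 ≠ 0) (hρ : ρ ≠ 0) :
    DH γ ![u, 0, p, ρ] 3 2 = 0 := by
  simp only [DH, Matrix.of_apply, hcomp3, (hdH3 γ (x := ![u, 0, p, ρ]) (hxne hγ hρ u p)).fderiv]
  simp [Pi.single_apply]
  all_goals try field_simp
  all_goals try ring

lemma H33 (hγ : γ - 1 ≠ 0) (hρ : ρ ≠ 0) :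
    DH γ ![u, 0, p, ρ] 3 3 = 0 := by
  simp only [DH, Matrix.of_apply, hcomp3, (hdH3 γ (x := ![u, 0, p, ρ]) (hxne hγ hρ u p)).fderiv]
  simp [Pi.single_apply]
  all_goals try field_simp
  all_goals try ring

end entries

theorem det_fin_four (A : Matrix (Fin 4) (Fin 4) ℝ) :
    A.det = A 0 0*A 1 1*A 2 2*A 3 3 - A 0 0*A 1 1*A 2 3*A 3 2 - A 0 0*A 1 2*A 2 1*A 3 3 + A 0 0*A 1 2*A 2 3*A 3 1 + A 0 0*A 1 3*A 2 1*A 3 2 - A 0 0*A 1 3*A 2 2*A 3 1 - A 0 1*A 1 0*A 2 2*A 3 3 + A 0 1*A 1 0*A 2 3*A 3 2 + A 0 1*A 1 2*A 2 0*A 3 3 - A 0 1*A 1 2*A 2 3*A 3 0 - A 0 1*A 1 3*A 2 0*A 3 2 + A 0 1*A 1 3*A 2 2*A 3 0 + A 0 2*A 1 0*A 2 1*A 3 3 - A 0 2*A 1 0*A 2 3*A 3 1 - A 0 2*A 1 1*A 2 0*A 3 3 + A 0 2*A 1 1*A 2 3*A 3 0 + A 0 2*A 1 3*A 2 0*A 3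 1 - A 0 2*A 1 3*A 2 1*A 3 0 - A 0 3*A 1 0*A 2 1*A 3 2 + A 0 3*A 1 0*A 2 2*A 3 1 + A 0 3*A 1 1*A 2 0*A 3 2 - A 0 3*A 1 1*A 2 2*A 3 0 - A 0 3*A 1 2*A 2 0*A 3 1 + A 0 3*A 1 2*A 2 1*A 3 0 := by
  rw [Matrix.det_succ_row_zero]
  simp [Fin.sum_univ_succ, Matrix.det_fin_three, Matrix.submatrix_apply, Fin.succAbove]
  ring

set_option maxHeartbeats 4000000 in
/-- Positivity of the determinant `det(A r̃₄, A r₃, A r₂, A r̃₁)` for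
`A = DH(U) - σ DW(U)` at a state `U = (u, 0, p, ρ)` with `u > c` and `λ₁(U) < σ < 0`. -/
theorem det_Ar_positive
    (γ u p ρ σ : ℝ) (hγ : 1 < γ) (hρ : 0 < ρ) (hp : 0 < p)
    (c : ℝ) (hc : c = Real.sqrt (γ * p / ρ)) (hsup : c < u)
    (lam4 : ℝ) (hlam4 : lam4 = c / Real.sqrt (u ^ 2 - c ^ 2))
    (hσ1 : -lam4 < σ) (hσ2 : σ < 0)
    (U : Fin 4 → ℝ) (hU : U = ![u, 0, p, ρ])
    (A : Matrix (Fin 4) (Fin 4) ℝ) (hA : A = DH γ U - σ • DW γ U) :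
    0 < (colMat
        (A.mulVec ![-lam4, 1, ρ * lam4 * u, ρ * lam4 * u / c ^ 2])
        (A.mulVec ![0, 0, 0, ρ])
        (A.mulVec ![u, 0, 0, 0])
        (A.mulVec ![lam4, 1, -(ρ * lam4 * u), -(ρ * lam4 * u) / c ^ 2])).det := by
  subst hU
  subst hA
  have hγ1 : γ - 1 ≠ 0 := by linarith
  have hρ0 : ρ ≠ 0 := ne_of_gt hρ
  have hc0 : 0 < c := by
    rw [hc]; exact Real.sqrt_pos.mpr (by positivity)
  have hu0 : 0 < u := lt_trans hc0 hsup
  have hc2 : c ^ 2 = γ * p / ρ := by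
    rw [hc]; exact Real.sq_sqrt (by positivity)
  have huc : 0 < u ^ 2 - c ^ 2 := by nlinarith
  have hlam0 : 0 < lam4 := by
    rw [hlam4]; exact div_pos hc0 (Real.sqrt_pos.mpr huc)
  have hlam2 : lam4 ^ 2 * (u ^ 2 - c ^ 2) = c ^ 2 := by
    rw [hlam4, div_pow, Real.sq_sqrt huc.le]
    field_simp
  have hc2ρ : c ^ 2 * ρ = γ * p := by
    rw [hc2]; field_simp
  have hrel2 : lam4 ^ 2 * (u ^ 2 * ρ - γ * p) = γ * p := by
    linear_combination ρ * hlam2 + (lam4 ^ 2 + 1) * hc2ρ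
  have hgp : (0:ℝ) < γ * p := by positivity
  have hlamne : lam4 ≠ 0 := ne_of_gt hlam0
  have c40 : (DH γ ![u, 0, p, ρ] - σ • DW γ ![u, 0, p, ρ]).mulVec ![-lam4, 1, ρ * lam4 * u, ρ * lam4 * u / c ^ 2] 0 =
      ρ * (lam4 - σ) / lam4 := by
    simp only [Matrix.mulVec, dotProduct, Fin.sum_univ_four, Matrix.sub_apply, Matrix.smul_apply, smul_eq_mul, W00 hγ1 hρ0, H00 hγ1 hρ0, W01 hγ1 hρ0, H01 hγ1 hρ0, W02 hγ1 hρ0, H02 hγ1 hρ0, W03 hγ1 hρ0, H03 hγ1 hρ0, Matrix.cons_val_zero, Matrix.cons_val_one, Matrix.head_cons, Matrix.cons_val_two, Matrix.tail_cons, Matrix.cons_val_three]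
    rw [hc2]
    field_simp
    linear_combination (-(σ * ρ)) * hrel2
  have c41 : (DH γ ![u, 0, p, ρ] - σ • DW γ ![u, 0, p, ρ]).mulVec ![-lam4, 1, ρ * lam4 * u, ρ * lam4 * u / c ^ 2] 1 =
      ρ * u * (lam4 - σ) / lam4 := by
    simp only [Matrix.mulVec, dotProduct, Fin.sum_univ_four, Matrix.sub_apply, Matrix.smul_apply, smul_eq_mul, W10 hγ1 hρ0, H10 hγ1 hρ0, W11 hγ1 hρ0, H11 hγ1 hρ0, W12 hγ1 hρ0, H12 hγ1 hρ0, W13 hγ1 hρ0, H13 hγ1 hρ0, Matrix.cons_val_zero, Matrix.cons_val_one, Matrix.head_cons, Matrix.cons_val_two, Matrix.tail_cons, Matrix.cons_val_three]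
    rw [hc2]
    field_simp
    linear_combination (-(σ * ρ * u)) * hrel2
  have c42 : (DH γ ![u, 0, p, ρ] - σ • DW γ ![u, 0, p, ρ]).mulVec ![-lam4, 1, ρ * lam4 * u, ρ * lam4 * u / c ^ 2] 2 =
      ρ * u * (lam4 - σ) := by
    simp only [Matrix.mulVec, dotProduct, Fin.sum_univ_four, Matrix.sub_apply, Matrix.smul_apply, smul_eq_mul, W20 hγ1 hρ0, H20 hγ1 hρ0, W21 hγ1 hρ0, H21 hγ1 hρ0, W22 hγ1 hρ0, H22 hγ1 hρ0, W23 hγ1 hρ0, H23 hγ1 hρ0, Matrix.cons_val_zero, Matrix.cons_val_one, Matrix.head_cons, Matrix.cons_val_two, Matrix.tail_cons, Matrix.cons_val_three]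
    ring
  have c43 : (DH γ ![u, 0, p, ρ] - σ • DW γ ![u, 0, p, ρ]).mulVec ![-lam4, 1, ρ * lam4 * u, ρ * lam4 * u / c ^ 2] 3 =
      ρ * (lam4 - σ) / lam4 * (γ * p / ((γ - 1) * ρ) + u ^ 2 / 2) := by
    simp only [Matrix.mulVec, dotProduct, Fin.sum_univ_four, Matrix.sub_apply, Matrix.smul_apply, smul_eq_mul, W30 hγ1 hρ0, H30 hγ1 hρ0, W31 hγ1 hρ0, H31 hγ1 hρ0, W32 hγ1 hρ0, H32 hγ1 hρ0, W33 hγ1 hρ0, H33 hγ1 hρ0, Matrix.cons_val_zero, Matrix.cons_val_one, Matrix.head_cons, Matrix.cons_val_two, Matrix.tail_cons, Matrix.cons_val_three]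
    rw [hc2]
    field_simp
    linear_combination (-(σ * ((γ - 1) * ρ * u ^ 2 + 2 * γ * p))) * hrel2
  have hv4 : (DH γ ![u, 0, p, ρ] - σ • DW γ ![u, 0, p, ρ]).mulVec ![-lam4, 1, ρ * lam4 * u, ρ * lam4 * u / c ^ 2] =
      ![ρ * (lam4 - σ) / lam4, ρ * u * (lam4 - σ) / lam4, ρ * u * (lam4 - σ), ρ * (lam4 - σ) / lam4 * (γ * p / ((γ - 1) * ρ) + u ^ 2 / 2)] := by
    funext i; fin_cases i <;> assumption
  have c30 : (DH γ ![u, 0, p, ρ] - σ • DW γ ![u, 0, p, ρ]).mulVec ![0, 0, 0, ρ] 0 =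
      -(σ * ρ * u) := by
    simp only [Matrix.mulVec, dotProduct, Fin.sum_univ_four, Matrix.sub_apply, Matrix.smul_apply, smul_eq_mul, W00 hγ1 hρ0, H00 hγ1 hρ0, W01 hγ1 hρ0, H01 hγ1 hρ0, W02 hγ1 hρ0, H02 hγ1 hρ0, W03 hγ1 hρ0, H03 hγ1 hρ0, Matrix.cons_val_zero, Matrix.cons_val_one, Matrix.head_cons, Matrix.cons_val_two, Matrix.tail_cons, Matrix.cons_val_three]
    ring
  have c31 : (DH γ ![u, 0, p, ρ] - σ • DW γ ![u, 0, p, ρ]).mulVec ![0, 0, 0, ρ] 1 =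
      -(σ * ρ * u ^ 2) := by
    simp only [Matrix.mulVec, dotProduct, Fin.sum_univ_four, Matrix.sub_apply, Matrix.smul_apply, smul_eq_mul, W10 hγ1 hρ0, H10 hγ1 hρ0, W11 hγ1 hρ0, H11 hγ1 hρ0, W12 hγ1 hρ0, H12 hγ1 hρ0, W13 hγ1 hρ0, H13 hγ1 hρ0, Matrix.cons_val_zero, Matrix.cons_val_one, Matrix.head_cons, Matrix.cons_val_two, Matrix.tail_cons, Matrix.cons_val_three]
    ring
  have c32 : (DH γ ![u, 0, p, ρ] - σ • DW γ ![u, 0, p, ρ]).mulVec ![0, 0, 0, ρ] 2 =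
      0 := by
    simp only [Matrix.mulVec, dotProduct, Fin.sum_univ_four, Matrix.sub_apply, Matrix.smul_apply, smul_eq_mul, W20 hγ1 hρ0, H20 hγ1 hρ0, W21 hγ1 hρ0, H21 hγ1 hρ0, W22 hγ1 hρ0, H22 hγ1 hρ0, W23 hγ1 hρ0, H23 hγ1 hρ0, Matrix.cons_val_zero, Matrix.cons_val_one, Matrix.head_cons, Matrix.cons_val_two, Matrix.tail_cons, Matrix.cons_val_three]
    ring
  have c33 : (DH γ ![u, 0, p, ρ] - σ • DW γ ![u, 0, p, ρ]).mulVec ![0, 0, 0, ρ] 3 =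
      -(σ * ρ * u ^ 3) / 2 := by
    simp only [Matrix.mulVec, dotProduct, Fin.sum_univ_four, Matrix.sub_apply, Matrix.smul_apply, smul_eq_mul, W30 hγ1 hρ0, H30 hγ1 hρ0, W31 hγ1 hρ0, H31 hγ1 hρ0, W32 hγ1 hρ0, H32 hγ1 hρ0, W33 hγ1 hρ0, H33 hγ1 hρ0, Matrix.cons_val_zero, Matrix.cons_val_one, Matrix.head_cons, Matrix.cons_val_two, Matrix.tail_cons, Matrix.cons_val_three]
    ring
  have hv3 : (DH γ ![u, 0, p, ρ] - σ • DW γ ![u, 0, p, ρ]).mulVec ![0, 0, 0, ρ] =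
      ![-(σ * ρ * u), -(σ * ρ * u ^ 2), 0, -(σ * ρ * u ^ 3) / 2] := by
    funext i; fin_cases i <;> assumption
  have c20 : (DH γ ![u, 0, p, ρ] - σ • DW γ ![u, 0, p, ρ]).mulVec ![u, 0, 0, 0] 0 =
      -(σ * ρ * u) := by
    simp only [Matrix.mulVec, dotProduct, Fin.sum_univ_four, Matrix.sub_apply, Matrix.smul_apply, smul_eq_mul, W00 hγ1 hρ0, H00 hγ1 hρ0, W01 hγ1 hρ0, H01 hγ1 hρ0, W02 hγ1 hρ0, H02 hγ1 hρ0, W03 hγ1 hρ0, H03 hγ1 hρ0, Matrix.cons_val_zero, Matrix.cons_val_one, Matrix.head_cons, Matrix.cons_val_two, Matrix.tail_cons, Matrix.cons_val_three]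
    ring
  have c21 : (DH γ ![u, 0, p, ρ] - σ • DW γ ![u, 0, p, ρ]).mulVec ![u, 0, 0, 0] 1 =
      -(2 * σ * ρ * u ^ 2) := by
    simp only [Matrix.mulVec, dotProduct, Fin.sum_univ_four, Matrix.sub_apply, Matrix.smul_apply, smul_eq_mul, W10 hγ1 hρ0, H10 hγ1 hρ0, W11 hγ1 hρ0, H11 hγ1 hρ0, W12 hγ1 hρ0, H12 hγ1 hρ0, W13 hγ1 hρ0, H13 hγ1 hρ0, Matrix.cons_val_zero, Matrix.cons_val_one, Matrix.head_cons, Matrix.cons_val_two, Matrix.tail_cons, Matrix.cons_val_three]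
    ring
  have c22 : (DH γ ![u, 0, p, ρ] - σ • DW γ ![u, 0, p, ρ]).mulVec ![u, 0, 0, 0] 2 =
      0 := by
    simp only [Matrix.mulVec, dotProduct, Fin.sum_univ_four, Matrix.sub_apply, Matrix.smul_apply, smul_eq_mul, W20 hγ1 hρ0, H20 hγ1 hρ0, W21 hγ1 hρ0, H21 hγ1 hρ0, W22 hγ1 hρ0, H22 hγ1 hρ0, W23 hγ1 hρ0, H23 hγ1 hρ0, Matrix.cons_val_zero, Matrix.cons_val_one, Matrix.head_cons, Matrix.cons_val_two, Matrix.tail_cons, Matrix.cons_val_three]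
    ring
  have c23 : (DH γ ![u, 0, p, ρ] - σ • DW γ ![u, 0, p, ρ]).mulVec ![u, 0, 0, 0] 3 =
      -(σ * ρ * u) * (γ * p / ((γ - 1) * ρ)) - (3 / 2) * σ * ρ * u ^ 3 := by
    simp only [Matrix.mulVec, dotProduct, Fin.sum_univ_four, Matrix.sub_apply, Matrix.smul_apply, smul_eq_mul, W30 hγ1 hρ0, H30 hγ1 hρ0, W31 hγ1 hρ0, H31 hγ1 hρ0, W32 hγ1 hρ0, H32 hγ1 hρ0, W33 hγ1 hρ0, H33 hγ1 hρ0, Matrix.cons_val_zero, Matrix.cons_val_one, Matrix.head_cons, Matrix.cons_val_two, Matrix.tail_cons, Matrix.cons_val_three]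
    ring
  have hv2 : (DH γ ![u, 0, p, ρ] - σ • DW γ ![u, 0, p, ρ]).mulVec ![u, 0, 0, 0] =
      ![-(σ * ρ * u), -(2 * σ * ρ * u ^ 2), 0, -(σ * ρ * u) * (γ * p / ((γ - 1) * ρ)) - (3 / 2) * σ * ρ * u ^ 3] := by
    funext i; fin_cases i <;> assumption
  have c10 : (DH γ ![u, 0, p, ρ] - σ • DW γ ![u, 0, p, ρ]).mulVec ![lam4, 1, -(ρ * lam4 * u), -(ρ * lam4 * u) / c ^ 2] 0 =
      ρ * (lam4 + σ) / lam4 := by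
    simp only [Matrix.mulVec, dotProduct, Fin.sum_univ_four, Matrix.sub_apply, Matrix.smul_apply, smul_eq_mul, W00 hγ1 hρ0, H00 hγ1 hρ0, W01 hγ1 hρ0, H01 hγ1 hρ0, W02 hγ1 hρ0, H02 hγ1 hρ0, W03 hγ1 hρ0, H03 hγ1 hρ0, Matrix.cons_val_zero, Matrix.cons_val_one, Matrix.head_cons, Matrix.cons_val_two, Matrix.tail_cons, Matrix.cons_val_three]
    rw [hc2]
    field_simp
    linear_combination (σ * ρ) * hrel2
  have c11 : (DH γ ![u, 0, p, ρ] - σ • DW γ ![u, 0, p, ρ]).mulVec ![lam4, 1, -(ρ * lam4 * u), -(ρ * lam4 * u) / c ^ 2] 1 =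
      ρ * u * (lam4 + σ) / lam4 := by
    simp only [Matrix.mulVec, dotProduct, Fin.sum_univ_four, Matrix.sub_apply, Matrix.smul_apply, smul_eq_mul, W10 hγ1 hρ0, H10 hγ1 hρ0, W11 hγ1 hρ0, H11 hγ1 hρ0, W12 hγ1 hρ0, H12 hγ1 hρ0, W13 hγ1 hρ0, H13 hγ1 hρ0, Matrix.cons_val_zero, Matrix.cons_val_one, Matrix.head_cons, Matrix.cons_val_two, Matrix.tail_cons, Matrix.cons_val_three]
    rw [hc2]
    field_simp
    linear_combination (σ * ρ * u) * hrel2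
  have c12 : (DH γ ![u, 0, p, ρ] - σ • DW γ ![u, 0, p, ρ]).mulVec ![lam4, 1, -(ρ * lam4 * u), -(ρ * lam4 * u) / c ^ 2] 2 =
      -(ρ * u * (lam4 + σ)) := by
    simp only [Matrix.mulVec, dotProduct, Fin.sum_univ_four, Matrix.sub_apply, Matrix.smul_apply, smul_eq_mul, W20 hγ1 hρ0, H20 hγ1 hρ0, W21 hγ1 hρ0, H21 hγ1 hρ0, W22 hγ1 hρ0, H22 hγ1 hρ0, W23 hγ1 hρ0, H23 hγ1 hρ0, Matrix.cons_val_zero, Matrix.cons_val_one, Matrix.head_cons, Matrix.cons_val_two, Matrix.tail_cons, Matrix.cons_val_three]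
    ring
  have c13 : (DH γ ![u, 0, p, ρ] - σ • DW γ ![u, 0, p, ρ]).mulVec ![lam4, 1, -(ρ * lam4 * u), -(ρ * lam4 * u) / c ^ 2] 3 =
      ρ * (lam4 + σ) / lam4 * (γ * p / ((γ - 1) * ρ) + u ^ 2 / 2) := by
    simp only [Matrix.mulVec, dotProduct, Fin.sum_univ_four, Matrix.sub_apply, Matrix.smul_apply, smul_eq_mul, W30 hγ1 hρ0, H30 hγ1 hρ0, W31 hγ1 hρ0, H31 hγ1 hρ0, W32 hγ1 hρ0, H32 hγ1 hρ0, W33 hγ1 hρ0, H33 hγ1 hρ0, Matrix.cons_val_zero, Matrix.cons_val_one, Matrix.head_cons, Matrix.cons_val_two, Matrix.tail_cons, Matrix.cons_val_three]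
    rw [hc2]
    field_simp
    linear_combination (σ * ((γ - 1) * ρ * u ^ 2 + 2 * γ * p)) * hrel2
  have hv1 : (DH γ ![u, 0, p, ρ] - σ • DW γ ![u, 0, p, ρ]).mulVec ![lam4, 1, -(ρ * lam4 * u), -(ρ * lam4 * u) / c ^ 2] =
      ![ρ * (lam4 + σ) / lam4, ρ * u * (lam4 + σ) / lam4, -(ρ * u * (lam4 + σ)), ρ * (lam4 + σ) / lam4 * (γ * p / ((γ - 1) * ρ) + u ^ 2 / 2)] := by
    funext i; fin_cases i <;> assumption
  rw [hv4, hv3, hv2, hv1]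
  have hdet : (colMat
      ![ρ * (lam4 - σ) / lam4, ρ * u * (lam4 - σ) / lam4, ρ * u * (lam4 - σ), ρ * (lam4 - σ) / lam4 * (γ * p / ((γ - 1) * ρ) + u ^ 2 / 2)]
      ![-(σ * ρ * u), -(σ * ρ * u ^ 2), 0, -(σ * ρ * u ^ 3) / 2]
      ![-(σ * ρ * u), -(2 * σ * ρ * u ^ 2), 0, -(σ * ρ * u) * (γ * p / ((γ - 1) * ρ)) - (3 / 2) * σ * ρ * u ^ 3]
      ![ρ * (lam4 + σ) / lam4, ρ * u * (lam4 + σ) / lam4, -(ρ * u * (lam4 + σ)), ρ * (lam4 + σ) / lam4 * (γ * p / ((γ - 1) * ρ) + u ^ 2 / 2)]).det =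
      2 * ρ ^ 4 * σ ^ 2 * u ^ 4 * (lam4 ^ 2 - σ ^ 2) * (γ * p) / ((γ - 1) * ρ * lam4) := by
    rw [det_fin_four]
    simp only [colMat, Matrix.of_apply, Matrix.cons_val_zero, Matrix.cons_val_one,
      Matrix.head_cons, Matrix.cons_val_two, Matrix.tail_cons, Matrix.cons_val_three]
    field_simp
    ring
  rw [hdet]
  have hσsq : 0 < σ ^ 2 := by nlinarith
  have hlamσ : 0 < lam4 ^ 2 - σ ^ 2 := by nlinarith
  have hnum : 0 < 2 * ρ ^ 4 * σ ^ 2 * u ^ 4 * (lam4 ^ 2 - σ ^ 2) * (γ * p) := by positivity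
  have hden : 0 < (γ - 1) * ρ * lam4 := mul_pos (mul_pos (by linarith) hρ) hlam0
  exact div_pos hnum hden
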